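/- Let p : E → B be a separated restriction semifunctor between restriction categories. Then every restriction monic in E is p-prone. -/
import Mathlib


open CategoryTheory

universe v₁ u₁ v₂ u₂ v₃ u₃

/-- A restriction category: a category equipped with a restriction combinator
satisfying the four restriction axioms [R.1]–[R.4]. -/
class RestrictionCategory (C : Type u₁) [Category.{v₁} C] where
  rest : ∀ {A B : C}, (A ⟶ B) → (A ⟶ A)
  rest_comp_self : ∀ {A B : C} (f : A ⟶ B), rest f ≫ f = f
  rest_comm : ∀ {A B C' : C} (f : A ⟶ B) (g : A ⟶ C'), rest f ≫ rest g = rest g ≫ rest f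
  rest_rest_comp : ∀ {A B C' : C} (f : A ⟶ B) (g : A ⟶ C'),
    rest (rest f ≫ g) = rest f ≫ rest g
  comp_rest : ∀ {A B C' : C} (f : A ⟶ B) (g : B ⟶ C'),
    f ≫ rest g = rest (f ≫ g) ≫ f

open RestrictionCategory

/-- A restriction semifunctor: preserves composition and restriction
(but not necessarily identities). -/
structure RestrictionSemifunctor (E : Type u₁) (B : Type u₂) [Category.{v₁} E]
    [Category.{v₂} B] [RestrictionCategory E] [RestrictionCategory B] where
  obj : E → B
  map : ∀ {X Y : E}, (X ⟶ Y) → (obj X ⟶ obj Y)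
  map_comp : ∀ {X Y Z : E} (f : X ⟶ Y) (g : Y ⟶ Z), map (f ≫ g) = map f ≫ map g
  map_rest : ∀ {X Y : E} (f : X ⟶ Y), map (rest f) = rest (map f)

variable {E : Type u₁} {B : Type u₂} [Category.{v₁} E] [Category.{v₂} B]
  [RestrictionCategory E] [RestrictionCategory B]

/-- A morphism `f' : X' ⟶ X` is `p`-prone if every precise triangle
`h ≫ p(f') = p(g)` in the base has a unique precise lifting. -/
def RestrictionSemifunctor.IsProne (p : RestrictionSemifunctor E B) {X' X : E}
    (f' : X' ⟶ X) : Prop :=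
  ∀ (Y : E) (g : Y ⟶ X) (h : p.obj Y ⟶ p.obj X'),
    h ≫ p.map f' = p.map g → rest h = rest (p.map g) →
    ∃! ht : Y ⟶ X', p.map ht = h ∧ ht ≫ f' = g ∧ rest ht = rest g

/-- A restriction monic: `m : B ⟶ A` with `r : A ⟶ B` such that `m ≫ r = 𝟙 B`
and `r ≫ m = r̄`. -/
def IsRestrictionMonic {C : Type u₃} [Category.{v₃} C] [RestrictionCategory C]
    {A B : C} (m : B ⟶ A) : Prop :=
  ∃ r : A ⟶ B, m ≫ r = 𝟙 B ∧ r ≫ m = rest r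

/-- A restriction semifunctor is separated if it is injective on restriction
idempotents on each object. -/
def RestrictionSemifunctor.IsSeparated (p : RestrictionSemifunctor E B) : Prop :=
  ∀ (X : E) (e e' : X ⟶ X), rest e = e → rest e' = e' → p.map e = p.map e' → e = e'

section Aux
variable {C : Type u₃} [Category.{v₃} C] [RestrictionCategory C]

lemma rest_id (A : C) : rest (𝟙 A) = 𝟙 A := by
  have := rest_comp_self (𝟙 A); simpa using this

lemma rest_idem {A B' : C} (f : A ⟶ B') : rest f ≫ rest f = rest f := by
  have h := rest_rest_comp (rest f) f  -- wrong shape; use direct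
  have h2 : rest (rest f ≫ f) = rest f ≫ rest f := rest_rest_comp f f
  rw [rest_comp_self] at h2; exact h2.symm

lemma rest_comp_le {A B' C' : C} (f : A ⟶ B') (g : B' ⟶ C') :
    rest f ≫ rest (f ≫ g) = rest (f ≫ g) := by
  have h : rest (rest f ≫ (f ≫ g)) = rest f ≫ rest (f ≫ g) :=
    rest_rest_comp f (f ≫ g)
  rw [← Category.assoc, rest_comp_self] at h
  exact h.symm

lemma rest_comp_le' {A B' C' : C} (f : A ⟶ B') (g : B' ⟶ C') :
    rest (f ≫ g) ≫ rest f = rest (f ≫ g) := by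
  rw [rest_comm, rest_comp_le]

lemma rest_comp_rest {A B' C' : C} (f : A ⟶ B') (g : B' ⟶ C') :
    rest (f ≫ rest g) = rest (f ≫ g) := by
  have h := comp_rest f g
  calc rest (f ≫ rest g) = rest (rest (f ≫ g) ≫ f) := by rw [h]
    _ = rest (f ≫ g) ≫ rest f := rest_rest_comp _ _
    _ = rest (f ≫ g) := rest_comp_le' f g

lemma rest_rest {A B' : C} (f : A ⟶ B') : rest (rest f) = rest f := by
  have h := rest_comp_rest (𝟙 A) f
  simpa using h

end Aux

/-- For a separated restriction semifunctor, every restriction monic of `E`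
is p-prone. -/
theorem separated_restrictionMonic_prone (p : RestrictionSemifunctor E B)
    (hsep : p.IsSeparated) {X Y : E} (m : X ⟶ Y)
    (hm : IsRestrictionMonic m) :
    p.IsProne m := by
  obtain ⟨r, hmr, hrm⟩ := hm
  intro Z g h hcomm hrest
  set e : p.obj X ⟶ p.obj X := p.map (𝟙 X) with he
  have he_rest : rest e = e := by
    rw [he, ← p.map_rest, rest_id]
  -- p.map m = e ≫ p.map m
  have hme : p.map m = e ≫ p.map m := by
    rw [he, ← p.map_comp, Category.id_comp]
  -- rest (p.map m) = e ≫ rest (p.map m)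
  have hrpm : rest (p.map m) = e ≫ rest (p.map m) := by
    conv_lhs => rw [hme, ← he_rest]
    rw [rest_rest_comp, he_rest]
  -- rest h = rest ((h ≫ e) ≫ rest (p.map m))
  have hkey : rest h = rest ((h ≫ e) ≫ rest (p.map m)) := by
    rw [hrest, ← hcomm, ← rest_comp_rest h (p.map m)]
    conv_lhs => rw [hrpm]
    rw [← Category.assoc]
  -- h ≫ e = h
  have hhe : h ≫ e = h := by
    have h1 : h ≫ e = rest (h ≫ e) ≫ h := by
      conv_lhs => rw [← he_rest]
      rw [comp_rest]
    have h2 : rest (h ≫ e) ≫ rest h = rest h := by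
      rw [hkey]; exact rest_comp_le (h ≫ e) (rest (p.map m))
    calc h ≫ e = rest (h ≫ e) ≫ h := h1
      _ = rest (h ≫ e) ≫ rest h ≫ h := by rw [rest_comp_self]
      _ = rest h ≫ h := by rw [← Category.assoc, h2]
      _ = h := rest_comp_self h
  -- p.map (g ≫ r) = h
  have hmap : p.map (g ≫ r) = h := by
    rw [p.map_comp, ← hcomm, Category.assoc, ← p.map_comp, hmr, ← he, hhe]
  -- e1 = rest g via separatedness
  have he1 : rest (g ≫ r) ≫ rest g = rest g := by
    apply hsep Z
    · rw [rest_rest_comp, rest_rest]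
    · exact rest_rest g
    · rw [p.map_comp, p.map_rest, p.map_rest, hmap, hrest, rest_idem]
  have hgr_rest : rest (g ≫ r) = rest g := by
    rw [← he1, rest_comm, rest_comp_le]
  -- (g ≫ r) ≫ m = g
  have hgrm : (g ≫ r) ≫ m = g := by
    rw [Category.assoc, hrm, comp_rest, hgr_rest, rest_comp_self]
  refine ⟨g ≫ r, ⟨hmap, hgrm, hgr_rest⟩, ?_⟩
  rintro k ⟨-, hk2, -⟩
  calc k = k ≫ m ≫ r := by rw [hmr, Category.comp_id]
    _ = (k ≫ m) ≫ r := by rw [Category.assoc]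
    _ = g ≫ r := by rw [hk2]
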